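/- Let G be a finite simple graph without isolated vertices and let D be an optimal dominating set in G. Suppose |D| = 5, α(G[D]) ≤ 2, and G[D] has no isolated vertices. Then there is an ordering (d₁, …, d₅) of D and a pair of independent sets R₁ and R₂ such that, where (V₁, …, V₅) is the standard partition of V(G) ∖ D with respect to this ordering, R₁ is an ISR for (V₁, V₂, V₃) and R₂ is an ISR for (V₄, V₅). -/

import Mathlib

/-- `D` is a dominating set of `G`: every vertex lies in `D` or has a neighbor in `D`. -/
def IsDomSet {V : Type*} (G : SimpleGraph V) (D : Set V) : Prop :=
  ∀ v : V, v ∈ D ∨ ∃ u ∈ D, G.Adj u v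

/-- `S` is an independent set of `G`. -/
def IsIndep {V : Type*} (G : SimpleGraph V) (S : Set V) : Prop :=
  S.Pairwise fun u v => ¬ G.Adj u v

/-- The domination number of `G`: the minimum size of a dominating set. -/
noncomputable def gamma {V : Type*} (G : SimpleGraph V) : ℕ :=
  sInf {n | ∃ D : Set V, IsDomSet G D ∧ D.ncard = n}

/-- The independence number of `G`: the maximum size of an independent set. -/
noncomputable def alpha {V : Type*} (G : SimpleGraph V) : ℕ :=
  sSup {n | ∃ S : Set V, IsIndep G S ∧ S.ncard = n}

/-- The inverse domination number of `G`: the minimum size of a dominating set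
disjoint from some minimum dominating set. -/
noncomputable def invGamma {V : Type*} (G : SimpleGraph V) : ℕ :=
  sInf {n | ∃ D T : Set V, IsDomSet G D ∧ D.ncard = gamma G ∧
    IsDomSet G T ∧ D ∩ T = ∅ ∧ T.ncard = n}

/-- The independence number of the subgraph of `G` induced by `D`. -/
noncomputable def alphaOn {V : Type*} (G : SimpleGraph V) (D : Set V) : ℕ :=
  sSup {n | ∃ S : Set V, S ⊆ D ∧ IsIndep G S ∧ S.ncard = n}

/-- The number of edges of the subgraph of `G` induced by `D`. -/
noncomputable def edgeCountOn {V : Type*} (G : SimpleGraph V) (D : Set V) : ℕ :=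
  {e ∈ G.edgeSet | ∀ v ∈ e, v ∈ D}.ncard

/-- `D` is an optimal dominating set: of minimum size; among those, `G[D]` has
maximum independence number; and subject to that, `G[D]` has fewest edges. -/
def IsOptimalDomSet {V : Type*} (G : SimpleGraph V) (D : Set V) : Prop :=
  IsDomSet G D ∧ D.ncard = gamma G ∧
  (∀ D' : Set V, IsDomSet G D' → D'.ncard = gamma G → alphaOn G D' ≤ alphaOn G D) ∧
  (∀ D' : Set V, IsDomSet G D' → D'.ncard = gamma G →
    alphaOn G D' = alphaOn G D → edgeCountOn G D ≤ edgeCountOn G D')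

/-- `w` is a private neighbor of `v` with respect to `D`: `w ∉ D` and `N(w) ∩ D = {v}`. -/
def IsPrivateNbr {V : Type*} (G : SimpleGraph V) (D : Set V) (v w : V) : Prop :=
  w ∉ D ∧ G.Adj v w ∧ ∀ u ∈ D, G.Adj u w → u = v

/-- `R` is a partial independent set of representatives (partial ISR) for the family `P`:
an independent set consisting of distinct representatives of some subfamily of `P`. -/
def IsPartialISR {V : Type*} (G : SimpleGraph V) {n : ℕ} (P : Fin n → Set V)
    (R : Set V) : Prop :=
  IsIndep G R ∧ ∃ (J : Set (Fin n)) (x : Fin n → V),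
    Set.InjOn x J ∧ (∀ j ∈ J, x j ∈ P j) ∧ R = x '' J

/-- `b(G)`: the largest number of vertices of an induced bipartite subgraph of `G`. -/
noncomputable def bipNum {V : Type*} (G : SimpleGraph V) : ℕ :=
  sSup {n | ∃ B A : Set V, A ⊆ B ∧ IsIndep G A ∧ IsIndep G (B \ A) ∧ B.ncard = n}

section AuxSuperISR

variable {V : Type*}

private lemma indep_pair' {G : SimpleGraph V} {a b : V} (h : ¬ G.Adj a b) :
    IsIndep G {a, b} := by
  intro x hx y hy hxy
  simp only [Set.mem_insert_iff, Set.mem_singleton_iff] at hx hy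
  rcases hx with rfl | rfl <;> rcases hy with rfl | rfl
  · exact absurd rfl hxy
  · exact h
  · exact fun hadj => h hadj.symm
  · exact absurd rfl hxy

private lemma indep_triple' {G : SimpleGraph V} {a b c : V} (h1 : ¬ G.Adj a b)
    (h2 : ¬ G.Adj a c) (h3 : ¬ G.Adj b c) : IsIndep G {a, b, c} := by
  intro x hx y hy hxy
  simp only [Set.mem_insert_iff, Set.mem_singleton_iff] at hx hy
  rcases hx with rfl | rfl | rfl <;> rcases hy with rfl | rfl | rfl <;>
    first
      | exact absurd rfl hxy
      | exact h1
      | exact h2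
      | exact h3
      | exact fun hadj => h1 hadj.symm
      | exact fun hadj => h2 hadj.symm
      | exact fun hadj => h3 hadj.symm

private lemma le_alphaOn' [Fintype V] (G : SimpleGraph V) (X S : Set V) (hS : S ⊆ X)
    (hI : IsIndep G S) : S.ncard ≤ alphaOn G X := by
  apply le_csSup
  · refine ⟨Nat.card V, ?_⟩
    rintro n ⟨S', -, -, rfl⟩
    have h := Set.ncard_le_ncard (Set.subset_univ S') Set.finite_univ
    simpa [Set.ncard_univ] using h
  · exact ⟨S, hS, hI, rfl⟩

private lemma gamma_le_of_dom' {G : SimpleGraph V} {T : Set V} (h : IsDomSet G T) :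
    gamma G ≤ T.ncard :=
  Nat.sInf_le ⟨T, h, rfl⟩

private lemma witness_of_small' {G : SimpleGraph V} (hγ : gamma G = 5) {T : Set V}
    (hT : T.ncard ≤ 4) : ∃ w, w ∉ T ∧ ∀ u ∈ T, ¬ G.Adj u w := by
  have hnd : ¬ IsDomSet G T := by
    intro h
    have := gamma_le_of_dom' h
    omega
  unfold IsDomSet at hnd
  push_neg at hnd
  exact hnd

private lemma priv_ex' [Fintype V] {G : SimpleGraph V} {D : Set V} (hdom : IsDomSet G D)
    (hγ : gamma G = 5) (hD5 : D.ncard = 5)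
    (hnoiso : ∀ v ∈ D, ∃ u ∈ D, G.Adj v u) {v : V} (hv : v ∈ D) :
    ∃ p, IsPrivateNbr G D v p := by
  have hcard : (D \ {v}).ncard ≤ 4 := by
    rw [Set.ncard_diff_singleton_of_mem hv, hD5]
  obtain ⟨w, hwT, hwa⟩ := witness_of_small' hγ hcard
  have hwv : w ≠ v := by
    rintro rfl
    obtain ⟨u, hu, hadj⟩ := hnoiso w hv
    exact hwa u ⟨hu, by simp [hadj.ne']⟩ hadj.symm
  have hwD : w ∉ D := fun hwD => hwT ⟨hwD, by simp [hwv]⟩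
  rcases hdom w with hwD' | ⟨u, hu, hadj⟩
  · exact absurd hwD' hwD
  · have huv : u = v := by
      by_contra hne
      exact hwa u ⟨hu, by simp [hne]⟩ hadj
    subst huv
    refine ⟨w, hwD, hadj, fun z hz hadjz => ?_⟩
    by_contra hne
    exact hwa z ⟨hz, by simp [hne]⟩ hadjz

private lemma edge_split' [Fintype V] (G : SimpleGraph V) (X : Set V) (v : V) :
    edgeCountOn G X =
      edgeCountOn G (X \ {v}) + {e ∈ G.edgeSet | (∀ x ∈ e, x ∈ X) ∧ v ∈ e}.ncard := by
  classical
  have hsplit : {e ∈ G.edgeSet | ∀ x ∈ e, x ∈ X} =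
      {e ∈ G.edgeSet | ∀ x ∈ e, x ∈ X \ {v}} ∪
        {e ∈ G.edgeSet | (∀ x ∈ e, x ∈ X) ∧ v ∈ e} := by
    ext e
    simp only [Set.mem_union, Set.mem_setOf_eq, Set.mem_diff, Set.mem_singleton_iff]
    constructor
    · rintro ⟨he, hX⟩
      by_cases hve : v ∈ e
      · exact Or.inr ⟨he, hX, hve⟩
      · exact Or.inl ⟨he, fun x hx => ⟨hX x hx, fun h => hve (h ▸ hx)⟩⟩
    · rintro (⟨he, hX⟩ | ⟨he, hX, -⟩)
      · exact ⟨he, fun x hx => (hX x hx).1⟩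
      · exact ⟨he, hX⟩
  have hdisj : Disjoint {e ∈ G.edgeSet | ∀ x ∈ e, x ∈ X \ {v}}
      {e ∈ G.edgeSet | (∀ x ∈ e, x ∈ X) ∧ v ∈ e} := by
    rw [Set.disjoint_left]
    rintro e ⟨-, hX⟩ ⟨-, -, hve⟩
    exact (hX v hve).2 rfl
  unfold edgeCountOn
  rw [hsplit, Set.ncard_union_eq hdisj (Set.toFinite _) (Set.toFinite _)]

private lemma uniq_nbr' [Fintype V] {G : SimpleGraph V} {D : Set V}
    (hopt : IsOptimalDomSet G D) (hγ : gamma G = 5) (hD5 : D.ncard = 5)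
    (hαD : alphaOn G D ≤ 2) (hnoiso : ∀ v ∈ D, ∃ u ∈ D, G.Adj v u)
    {u v : V} (hu : u ∈ D) (hv : v ∈ D) (huv : u ≠ v)
    (hbad : ∀ p q, IsPrivateNbr G D u p → IsPrivateNbr G D v q → G.Adj p q)
    {z z' : V} (hz : z ∈ D) (hz' : z' ∈ D) (haz : G.Adj v z) (haz' : G.Adj v z') :
    z = z' := by
  classical
  by_contra hne
  obtain ⟨p₀, hp₀⟩ := priv_ex' hopt.1 hγ hD5 hnoiso hu
  have hp₀D : p₀ ∉ D := hp₀.1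
  have hp₀Dv : p₀ ∉ D \ {v} := fun h => hp₀D h.1
  set D' : Set V := insert p₀ (D \ {v}) with hD'
  have hdom' : IsDomSet G D' := by
    intro x
    rcases hopt.1 x with hxD | ⟨y, hy, hyx⟩
    · by_cases hxv : x = v
      · subst hxv
        obtain ⟨y, hy, hxy⟩ := hnoiso x hxD
        exact Or.inr ⟨y, Or.inr ⟨hy, by simp [hxy.ne']⟩, hxy.symm⟩
      · exact Or.inl (Or.inr ⟨hxD, by simp [hxv]⟩)
    · by_cases hyv : y = v
      · subst hyv
        by_cases hex : ∃ y' ∈ D, y' ≠ y ∧ G.Adj y' x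
        · obtain ⟨y', hy', hy'v, hy'x⟩ := hex
          exact Or.inr ⟨y', Or.inr ⟨hy', by simp [hy'v]⟩, hy'x⟩
        · push_neg at hex
          by_cases hxD : x ∈ D
          · exact Or.inl (Or.inr ⟨hxD, by simp [hyx.ne']⟩)
          · have hpriv : IsPrivateNbr G D y x := by
              refine ⟨hxD, hyx, fun z1 hz1 hz1x => ?_⟩
              by_contra hzv
              exact hex z1 hz1 hzv hz1x
            exact Or.inr ⟨p₀, Or.inl rfl, hbad p₀ x hp₀ hpriv⟩
      · exact Or.inr ⟨y, Or.inr ⟨hy, by simp [hyv]⟩, hyx⟩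
  have hcard' : D'.ncard = gamma G := by
    rw [hγ, hD', Set.ncard_insert_of_notMem hp₀Dv (Set.toFinite _),
      Set.ncard_diff_singleton_of_mem hv, hD5]
  have hz₀ex : ∃ z₀ ∈ D, z₀ ≠ u ∧ z₀ ≠ v := by
    have hsub : ({u, v} : Set V) ⊆ D := by
      intro x hx
      simp only [Set.mem_insert_iff, Set.mem_singleton_iff] at hx
      rcases hx with rfl | rfl
      exacts [hu, hv]
    have hdne : (D \ {u, v}).Nonempty := by
      apply Set.nonempty_of_ncard_ne_zero
      rw [Set.ncard_diff hsub (Set.toFinite _), Set.ncard_pair huv, hD5]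
      norm_num
    obtain ⟨z₀, hz₀D, hz₀n⟩ := hdne
    simp only [Set.mem_insert_iff, Set.mem_singleton_iff, not_or] at hz₀n
    exact ⟨z₀, hz₀D, hz₀n.1, hz₀n.2⟩
  obtain ⟨z₀, hz₀D, hz₀u, hz₀v⟩ := hz₀ex
  have hα2 : 2 ≤ alphaOn G D' := by
    have hindep : IsIndep G {p₀, z₀} :=
      indep_pair' (fun h => hz₀u (hp₀.2.2 z₀ hz₀D h.symm))
    have hsub : ({p₀, z₀} : Set V) ⊆ D' := by
      intro x hx
      simp only [Set.mem_insert_iff, Set.mem_singleton_iff] at hx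
      rcases hx with rfl | rfl
      · exact Or.inl rfl
      · exact Or.inr ⟨hz₀D, by simp [hz₀v]⟩
    have hc : ({p₀, z₀} : Set V).ncard = 2 :=
      Set.ncard_pair (fun h => hp₀D (h ▸ hz₀D))
    calc 2 = ({p₀, z₀} : Set V).ncard := hc.symm
      _ ≤ alphaOn G D' := le_alphaOn' G D' _ hsub hindep
  have hαeq : alphaOn G D' = alphaOn G D :=
    le_antisymm (hopt.2.2.1 D' hdom' hcard') (hαD.trans hα2)
  have hedge := hopt.2.2.2 D' hdom' hcard' hαeq
  have hsplitD := edge_split' G D v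
  have hsplitD' := edge_split' G D' p₀
  have hDv : D' \ {p₀} = D \ {v} := by
    ext x
    simp only [hD', Set.mem_diff, Set.mem_insert_iff, Set.mem_singleton_iff]
    constructor
    · rintro ⟨rfl | hx, hxp⟩
      · exact absurd rfl hxp
      · exact hx
    · intro hx
      exact ⟨Or.inr hx, fun h => hp₀D (h ▸ hx.1)⟩
  have hEp : ∀ e ∈ {e ∈ G.edgeSet | (∀ x ∈ e, x ∈ D') ∧ p₀ ∈ e}, e = s(p₀, u) := by
    intro e
    induction e using Sym2.ind with
    | _ x y =>
      rintro ⟨he, hX, hpe⟩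
      have hadjxy : G.Adj x y := G.mem_edgeSet.mp he
      rcases Sym2.mem_iff.mp hpe with h | h
      · obtain rfl : x = p₀ := h.symm
        have hyD' : y ∈ D' := hX y (Sym2.mem_mk_right _ _)
        have hyne : y ≠ x := hadjxy.ne'
        have hyD : y ∈ D := by
          rcases hyD' with h' | hyD
          · exact absurd h' hyne
          · exact hyD.1
        have hyu : y = u := hp₀.2.2 y hyD hadjxy.symm
        rw [hyu]
      · obtain rfl : y = p₀ := h.symm
        have hxD' : x ∈ D' := hX x (Sym2.mem_mk_left _ _)
        have hxne : x ≠ y := hadjxy.ne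
        have hxD : x ∈ D := by
          rcases hxD' with h' | hxD
          · exact absurd h' hxne
          · exact hxD.1
        have hxu : x = u := hp₀.2.2 x hxD hadjxy
        rw [hxu, Sym2.eq_swap]
  have hEple : {e ∈ G.edgeSet | (∀ x ∈ e, x ∈ D') ∧ p₀ ∈ e}.ncard ≤ 1 := by
    calc {e ∈ G.edgeSet | (∀ x ∈ e, x ∈ D') ∧ p₀ ∈ e}.ncard
        ≤ ({s(p₀, u)} : Set (Sym2 V)).ncard :=
          Set.ncard_le_ncard (fun e he => Set.mem_singleton_iff.mpr (hEp e he))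
            (Set.toFinite _)
      _ = 1 := Set.ncard_singleton _
  have hEv : 2 ≤ {e ∈ G.edgeSet | (∀ x ∈ e, x ∈ D) ∧ v ∈ e}.ncard := by
    have hmem1 : s(v, z) ∈ {e ∈ G.edgeSet | (∀ x ∈ e, x ∈ D) ∧ v ∈ e} := by
      refine ⟨G.mem_edgeSet.mpr haz, fun x hx => ?_, Sym2.mem_mk_left _ _⟩
      rcases Sym2.mem_iff.mp hx with rfl | rfl
      exacts [hv, hz]
    have hmem2 : s(v, z') ∈ {e ∈ G.edgeSet | (∀ x ∈ e, x ∈ D) ∧ v ∈ e} := by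
      refine ⟨G.mem_edgeSet.mpr haz', fun x hx => ?_, Sym2.mem_mk_left _ _⟩
      rcases Sym2.mem_iff.mp hx with rfl | rfl
      exacts [hv, hz']
    have hne2 : s(v, z) ≠ s(v, z') := by
      intro h
      rcases Sym2.eq_iff.mp h with ⟨-, h2⟩ | ⟨h1, -⟩
      · exact hne h2
      · exact haz'.ne h1
    calc 2 = ({s(v, z), s(v, z')} : Set (Sym2 V)).ncard := (Set.ncard_pair hne2).symm
      _ ≤ _ := by
          refine Set.ncard_le_ncard ?_ (Set.toFinite _)
          intro e he
          simp only [Set.mem_insert_iff, Set.mem_singleton_iff] at he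
          rcases he with rfl | rfl
          exacts [hmem1, hmem2]
  rw [hsplitD, hsplitD', hDv] at hedge
  omega

private lemma bad_nbrs' [Fintype V] {G : SimpleGraph V} {D : Set V}
    (hopt : IsOptimalDomSet G D) (hγ : gamma G = 5) (hD5 : D.ncard = 5)
    (hαD : alphaOn G D ≤ 2) (hnoiso : ∀ v ∈ D, ∃ u ∈ D, G.Adj v u)
    {u v : V} (hu : u ∈ D) (hv : v ∈ D) (huv : u ≠ v)
    (hbad : ∀ p q, IsPrivateNbr G D u p → IsPrivateNbr G D v q → G.Adj p q) :
    ∀ z ∈ D, G.Adj u z → z = v := by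
  obtain ⟨m, hm, hum⟩ := hnoiso u hu
  have hbad' : ∀ p q, IsPrivateNbr G D v p → IsPrivateNbr G D u q → G.Adj p q :=
    fun p q hp hq => (hbad q p hq hp).symm
  have huniq : ∀ z ∈ D, G.Adj u z → z = m :=
    fun z hz haz => uniq_nbr' hopt hγ hD5 hαD hnoiso hv hu huv.symm hbad' hz hm haz hum
  have hmv : m = v := by
    by_contra hmv
    obtain ⟨m', hm', hvm'⟩ := hnoiso v hv
    have hvuniq : ∀ z ∈ D, G.Adj v z → z = m' :=
      fun z hz haz => uniq_nbr' hopt hγ hD5 hαD hnoiso hu hv huv hbad hz hm' haz hvm'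
    have huvadj : ¬ G.Adj u v := fun h => hmv ((huniq v hv h).symm)
    have hQsub : ({u, v, m, m'} : Set V) ⊆ D := by
      intro x hx
      simp only [Set.mem_insert_iff, Set.mem_singleton_iff] at hx
      rcases hx with rfl | rfl | rfl | rfl
      exacts [hu, hv, hm, hm']
    have hQ4 : ({u, v, m, m'} : Set V).ncard ≤ 4 := by
      calc ({u, v, m, m'} : Set V).ncard
          ≤ ({v, m, m'} : Set V).ncard + 1 := Set.ncard_insert_le _ _
        _ ≤ (({m, m'} : Set V).ncard + 1) + 1 := by
            have := Set.ncard_insert_le v ({m, m'} : Set V)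
            omega
        _ ≤ ((({m'} : Set V).ncard + 1) + 1) + 1 := by
            have := Set.ncard_insert_le m ({m'} : Set V)
            omega
        _ ≤ 4 := by rw [Set.ncard_singleton]
    have hDQ : (D \ {u, v, m, m'}).Nonempty := by
      apply Set.nonempty_of_ncard_ne_zero
      rw [Set.ncard_diff hQsub (Set.toFinite _), hD5]
      omega
    obtain ⟨w, hwD, hwQ⟩ := hDQ
    simp only [Set.mem_insert_iff, Set.mem_singleton_iff, not_or] at hwQ
    obtain ⟨hwu, hwv, hwm, hwm'⟩ := hwQ
    have h2 : ¬ G.Adj u w := fun h => hwm (huniq w hwD h)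
    have h3 : ¬ G.Adj v w := fun h => hwm' (hvuniq w hwD h)
    have hSsub : ({u, v, w} : Set V) ⊆ D := by
      intro x hx
      simp only [Set.mem_insert_iff, Set.mem_singleton_iff] at hx
      rcases hx with rfl | rfl | rfl
      exacts [hu, hv, hwD]
    have hc3 : ({u, v, w} : Set V).ncard = 3 := by
      rw [Set.ncard_insert_of_notMem (by
          simp only [Set.mem_insert_iff, Set.mem_singleton_iff, not_or]
          exact ⟨huv, Ne.symm hwu⟩) (Set.toFinite _),
        Set.ncard_pair (Ne.symm hwv)]
    have := le_alphaOn' G D _ hSsub (indep_triple' huvadj h2 h3)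
    rw [hc3] at this
    omega
  intro z hz haz
  exact (huniq z hz haz).trans hmv

end AuxSuperISR

theorem super_isrs {V : Type*} [Fintype V] (G : SimpleGraph V)
    (hiso : ∀ v : V, ∃ u, G.Adj v u)
    (D : Set V) (hopt : IsOptimalDomSet G D)
    (hD5 : D.ncard = 5) (hαD : alphaOn G D ≤ 2)
    (hnoiso : ∀ v ∈ D, ∃ u ∈ D, G.Adj v u) :
    ∃ d : Fin 5 → V, Function.Injective d ∧ Set.range d = D ∧
      ∃ Vpart : Fin 5 → Set V,
        (∀ i : Fin 5, Vpart i =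
          {w | w ∈ Set.univ \ D ∧ G.Adj (d i) w} \ ⋃ j < i, Vpart j) ∧
        (∃ r₁ ∈ Vpart 0, ∃ r₂ ∈ Vpart 1, ∃ r₃ ∈ Vpart 2,
          IsIndep G {r₁, r₂, r₃}) ∧
        (∃ r₄ ∈ Vpart 3, ∃ r₅ ∈ Vpart 4, IsIndep G {r₄, r₅}) := by
  classical
  have hγ : gamma G = 5 := by rw [← hopt.2.1, hD5]
  have hIndep3 : ∀ a ∈ D, ∀ b ∈ D, ∀ c ∈ D, a ≠ b → a ≠ c → b ≠ c →
      ¬ G.Adj a b → ¬ G.Adj a c → ¬ G.Adj b c → False := by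
    intro a ha b hb c hc hab hac hbc h1 h2 h3
    have hsub : ({a, b, c} : Set V) ⊆ D := by
      intro x hx
      simp only [Set.mem_insert_iff, Set.mem_singleton_iff] at hx
      rcases hx with rfl | rfl | rfl
      exacts [ha, hb, hc]
    have hc3 : ({a, b, c} : Set V).ncard = 3 := by
      rw [Set.ncard_insert_of_notMem (by
          simp only [Set.mem_insert_iff, Set.mem_singleton_iff, not_or]
          exact ⟨hab, hac⟩) (Set.toFinite _),
        Set.ncard_pair hbc]
    have := le_alphaOn' G D _ hsub (indep_triple' h1 h2 h3)
    rw [hc3] at this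
    omega
  -- choose the pair (b, c)
  obtain ⟨b, c, hbD, hcD, hbc, hGood, hPbc, hLeft⟩ :
      ∃ b c, b ∈ D ∧ c ∈ D ∧ b ≠ c ∧
        (∃ p q, IsPrivateNbr G D b p ∧ IsPrivateNbr G D c q ∧ ¬ G.Adj p q) ∧
        (∀ w ∈ D, w ≠ b → w ≠ c → ¬ G.Adj b w → ¬ G.Adj c w → False) ∧
        (∀ s t, s ∈ D → t ∈ D → s ≠ b → s ≠ c → t ≠ b → t ≠ c → s ≠ t →
          ∃ p q, IsPrivateNbr G D s p ∧ IsPrivateNbr G D t q ∧ ¬ G.Adj p q) := by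
    by_cases hB : ∃ u ∈ D, ∃ v ∈ D, u ≠ v ∧
        ∀ p q, IsPrivateNbr G D u p → IsPrivateNbr G D v q → G.Adj p q
    · obtain ⟨u, hu, v, hv, huv, hbad⟩ := hB
      have Hu : ∀ z ∈ D, G.Adj u z → z = v :=
        bad_nbrs' hopt hγ hD5 hαD hnoiso hu hv huv hbad
      have hsub2 : ({u, v} : Set V) ⊆ D := by
        intro x hx
        simp only [Set.mem_insert_iff, Set.mem_singleton_iff] at hx
        rcases hx with rfl | rfl
        exacts [hu, hv]
      have hne3 : (D \ {u, v}).Nonempty := by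
        apply Set.nonempty_of_ncard_ne_zero
        rw [Set.ncard_diff hsub2 (Set.toFinite _), Set.ncard_pair huv, hD5]
        norm_num
      obtain ⟨x, hxD, hxn⟩ := hne3
      simp only [Set.mem_insert_iff, Set.mem_singleton_iff, not_or] at hxn
      obtain ⟨hxu, hxv⟩ := hxn
      have hux : ¬ G.Adj u x := fun h => hxv (Hu x hxD h)
      refine ⟨u, x, hu, hxD, Ne.symm hxu, ?_, ?_, ?_⟩
      · -- there are nonadjacent privates for (u, x)
        by_contra hcon
        push_neg at hcon
        have Hx : ∀ z ∈ D, G.Adj x z → z = u :=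
          bad_nbrs' hopt hγ hD5 hαD hnoiso hxD hu hxu
            (fun p q hp hq => (hcon q p hq hp).symm)
        obtain ⟨y, hy, hxy⟩ := hnoiso x hxD
        have hyu : y = u := Hx y hy hxy
        rw [hyu] at hxy
        exact hux hxy.symm
      · intro w hwD hwu hwx h1 h2
        exact hIndep3 u hu x hxD w hwD (Ne.symm hxu) (Ne.symm hwu) (Ne.symm hwx) hux h1 h2
      · intro s t hsD htD hsu hsx htu htx hst
        by_contra hcon
        push_neg at hcon
        by_cases hsv : s = v
        · have htv : t ≠ v := fun h => hst (hsv.trans h.symm)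
          have hut : ¬ G.Adj u t := fun h => htv (Hu t htD h)
          have hxt : G.Adj x t := by
            by_contra hxt
            exact hIndep3 u hu x hxD t htD (Ne.symm hxu) (Ne.symm htu) (Ne.symm htx)
              hux hut hxt
          have Ht : ∀ z ∈ D, G.Adj t z → z = s :=
            bad_nbrs' hopt hγ hD5 hαD hnoiso htD hsD (Ne.symm hst)
              (fun p q hp hq => (hcon q p hq hp).symm)
          have hxs' : x = s := Ht x hxD hxt.symm
          exact hsx hxs'.symm
        · have hus : ¬ G.Adj u s := fun h => hsv (Hu s hsD h)
          have hxs : G.Adj x s := by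
            by_contra hxs
            exact hIndep3 u hu x hxD s hsD (Ne.symm hxu) (Ne.symm hsu) (Ne.symm hsx)
              hux hus hxs
          have Hs : ∀ z ∈ D, G.Adj s z → z = t :=
            bad_nbrs' hopt hγ hD5 hαD hnoiso hsD htD hst hcon
          have hxt' : x = t := Hs x hxD hxs.symm
          exact htx hxt'.symm
    · push_neg at hB
      by_cases hE : ∃ a ∈ D, ∃ b' ∈ D, a ≠ b' ∧ ¬ G.Adj a b'
      · obtain ⟨a, ha, b', hb', hab, hnadj⟩ := hE
        refine ⟨a, b', ha, hb', hab, hB a ha b' hb' hab, ?_,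
          fun s t hs ht _ _ _ _ hst => hB s hs t ht hst⟩
        intro w hw hwa hwb h1 h2
        exact hIndep3 a ha b' hb' w hw hab (Ne.symm hwa) (Ne.symm hwb) hnadj h1 h2
      · push_neg at hE
        have hDne : D.Nonempty :=
          Set.nonempty_of_ncard_ne_zero (by rw [hD5]; norm_num)
        obtain ⟨a, ha⟩ := hDne
        have hDne2 : (D \ {a}).Nonempty := by
          apply Set.nonempty_of_ncard_ne_zero
          rw [Set.ncard_diff_singleton_of_mem ha, hD5]
          norm_num
        obtain ⟨b, hbDa⟩ := hDne2
        have hbD : b ∈ D := hbDa.1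
        have hab : a ≠ b := fun h => by simp [h] at hbDa
        refine ⟨a, b, ha, hbD, hab, hB a ha b hbD hab, ?_,
          fun s t hs ht _ _ _ _ hst => hB s hs t ht hst⟩
        intro w hw hwa hwb h1 h2
        exact h1 (hE a ha w hw (Ne.symm hwa))
  obtain ⟨qb, qc, hqb, hqc, hqbc⟩ := hGood
  have hqbD : qb ∉ D := hqb.1
  have hqcD : qc ∉ D := hqc.1
  have hT4 : ({b, c, qb, qc} : Set V).ncard ≤ 4 := by
    calc ({b, c, qb, qc} : Set V).ncard
        ≤ ({c, qb, qc} : Set V).ncard + 1 := Set.ncard_insert_le _ _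
      _ ≤ (({qb, qc} : Set V).ncard + 1) + 1 := by
          have := Set.ncard_insert_le c ({qb, qc} : Set V)
          omega
      _ ≤ ((({qc} : Set V).ncard + 1) + 1) + 1 := by
          have := Set.ncard_insert_le qb ({qc} : Set V)
          omega
      _ ≤ 4 := by rw [Set.ncard_singleton]
  obtain ⟨w, hwT, hwadj⟩ := witness_of_small' hγ hT4
  have hnbw : ¬ G.Adj b w := hwadj b (by simp)
  have hncw : ¬ G.Adj c w := hwadj c (by simp)
  have hnqbw : ¬ G.Adj qb w := hwadj qb (by simp)
  have hnqcw : ¬ G.Adj qc w := hwadj qc (by simp)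
  have hwD : w ∉ D := by
    intro hwDm
    have hwb : w ≠ b := by rintro rfl; exact hwT (by simp)
    have hwc : w ≠ c := by rintro rfl; exact hwT (by simp)
    exact hPbc w hwDm hwb hwc hnbw hncw
  obtain ⟨d₁, hd₁D, hd₁w⟩ : ∃ u ∈ D, G.Adj u w := (hopt.1 w).resolve_left hwD
  have hd₁b : d₁ ≠ b := by rintro rfl; exact hnbw hd₁w
  have hd₁c : d₁ ≠ c := by rintro rfl; exact hncw hd₁w
  have hsub3 : ({b, c, d₁} : Set V) ⊆ D := by
    intro x hx
    simp only [Set.mem_insert_iff, Set.mem_singleton_iff] at hx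
    rcases hx with rfl | rfl | rfl
    exacts [hbD, hcD, hd₁D]
  have hc3' : ({b, c, d₁} : Set V).ncard = 3 := by
    rw [Set.ncard_insert_of_notMem (by
        simp only [Set.mem_insert_iff, Set.mem_singleton_iff, not_or]
        exact ⟨hbc, Ne.symm hd₁b⟩) (Set.toFinite _),
      Set.ncard_pair (Ne.symm hd₁c)]
  have hL2 : (D \ {b, c, d₁}).ncard = 2 := by
    rw [Set.ncard_diff hsub3 (Set.toFinite _), hc3', hD5]
  obtain ⟨s, t, hst, hLeq⟩ := Set.ncard_eq_two.mp hL2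
  have hsmem : s ∈ D \ ({b, c, d₁} : Set V) := by rw [hLeq]; exact Or.inl rfl
  have htmem : t ∈ D \ ({b, c, d₁} : Set V) := by rw [hLeq]; exact Or.inr rfl
  obtain ⟨hsD, hsnot⟩ := hsmem
  obtain ⟨htD, htnot⟩ := htmem
  simp only [Set.mem_insert_iff, Set.mem_singleton_iff, not_or] at hsnot htnot
  obtain ⟨hsb, hsc, hsd₁⟩ := hsnot
  obtain ⟨htb, htc, htd₁⟩ := htnot
  obtain ⟨r₄, r₅, hr₄, hr₅, hr45⟩ := hLeft s t hsD htD hsb hsc htb htc hst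
  -- the ordering of D
  set dv : Fin 5 → V := fun i =>
    if i.val = 0 then d₁ else if i.val = 1 then b else if i.val = 2 then c
      else if i.val = 3 then s else t with hdv
  have e0 : dv 0 = d₁ := rfl
  have e1 : dv 1 = b := rfl
  have e2 : dv 2 = c := rfl
  have e3 : dv 3 = s := rfl
  have e4 : dv 4 = t := rfl
  have c0 : ((0 : Fin 5) : ℕ) = 0 := rfl
  have c1 : ((1 : Fin 5) : ℕ) = 1 := rfl
  have c2 : ((2 : Fin 5) : ℕ) = 2 := rfl
  have c3 : ((3 : Fin 5) : ℕ) = 3 := rfl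
  have c4 : ((4 : Fin 5) : ℕ) = 4 := rfl
  have hinj : Function.Injective dv := by
    intro i j hij
    fin_cases i <;> fin_cases j <;>
      first
        | rfl
        | exact absurd hij hd₁b
        | exact absurd hij hd₁c
        | exact absurd hij (Ne.symm hsd₁)
        | exact absurd hij (Ne.symm htd₁)
        | exact absurd hij hbc
        | exact absurd hij (Ne.symm hsb)
        | exact absurd hij (Ne.symm htb)
        | exact absurd hij (Ne.symm hsc)
        | exact absurd hij (Ne.symm htc)
        | exact absurd hij hst
        | exact absurd hij.symm hd₁b
        | exact absurd hij.symm hd₁c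
        | exact absurd hij.symm (Ne.symm hsd₁)
        | exact absurd hij.symm (Ne.symm htd₁)
        | exact absurd hij.symm hbc
        | exact absurd hij.symm (Ne.symm hsb)
        | exact absurd hij.symm (Ne.symm htb)
        | exact absurd hij.symm (Ne.symm hsc)
        | exact absurd hij.symm (Ne.symm htc)
        | exact absurd hij.symm hst
  have hrange : Set.range dv = D := by
    apply Set.eq_of_subset_of_ncard_le
    · rintro x ⟨i, rfl⟩
      fin_cases i
      exacts [hd₁D, hbD, hcD, hsD, htD]
    · have h5 : (Set.range dv).ncard = 5 := by
        rw [← Set.image_univ, Set.ncard_image_of_injective _ hinj, Set.ncard_univ]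
        simp
      rw [hD5, h5]
    · exact Set.toFinite _
  set Vp : Fin 5 → Set V := fun i =>
    {x | x ∉ D ∧ G.Adj (dv i) x ∧ ∀ j, j < i → ¬ G.Adj (dv j) x} with hVp
  have hmemVp : ∀ (i : Fin 5) (x : V), x ∈ Vp i ↔
      (x ∉ D ∧ G.Adj (dv i) x ∧ ∀ j, j < i → ¬ G.Adj (dv j) x) := fun i x => Iff.rfl
  have hminVp : ∀ (i : Fin 5) (x : V), x ∉ D → (∀ j, j < i → x ∉ Vp j) →
      ∀ j, j < i → ¬ G.Adj (dv j) x := by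
    intro i x hxD hnot
    by_contra hcon
    push_neg at hcon
    obtain ⟨j, hj, hadj⟩ := hcon
    set F : Finset (Fin 5) :=
      Finset.univ.filter (fun k : Fin 5 => k < i ∧ G.Adj (dv k) x) with hF
    have hne : F.Nonempty := ⟨j, by simp [hF, hj, hadj]⟩
    have hmF : F.min' hne ∈ F := F.min'_mem hne
    have hmF' : F.min' hne < i ∧ G.Adj (dv (F.min' hne)) x :=
      (Finset.mem_filter.mp hmF).2
    refine hnot _ hmF'.1 ((hmemVp _ x).mpr ⟨hxD, hmF'.2, ?_⟩)
    intro k hk hadjk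
    have hkF : k ∈ F :=
      Finset.mem_filter.mpr ⟨Finset.mem_univ _, hk.trans hmF'.1, hadjk⟩
    exact absurd (F.min'_le k hkF) (not_le.mpr hk)
  have hVeq : ∀ i : Fin 5, Vp i =
      {x | x ∈ Set.univ \ D ∧ G.Adj (dv i) x} \ ⋃ j < i, Vp j := by
    intro i
    ext x
    simp only [Set.mem_diff, Set.mem_setOf_eq, Set.mem_univ, true_and, Set.mem_iUnion,
      not_exists]
    constructor
    · intro hx
      obtain ⟨h1, h2, h3⟩ := (hmemVp i x).mp hx
      exact ⟨⟨h1, h2⟩, fun j hj hmem => h3 j hj ((hmemVp j x).mp hmem).2.1⟩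
    · rintro ⟨⟨h1, h2⟩, h3⟩
      exact (hmemVp i x).mpr ⟨h1, h2, hminVp i x h1 (fun j hj hm => h3 j hj hm)⟩
  have hr₁V : w ∈ Vp 0 := by
    refine (hmemVp 0 w).mpr ⟨hwD, hd₁w, ?_⟩
    intro j hj
    have hjv : (j : ℕ) < 0 := hj
    exact absurd hjv (Nat.not_lt_zero _)
  have hr₂V : qb ∈ Vp 1 := by
    refine (hmemVp 1 qb).mpr ⟨hqbD, hqb.2.1, ?_⟩
    intro j hj hadj
    have hjv : (j : ℕ) < 1 := hj
    have hj0 : j = 0 := Fin.ext (by omega)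
    rw [hj0] at hadj
    exact hd₁b (hqb.2.2 d₁ hd₁D hadj)
  have hr₃V : qc ∈ Vp 2 := by
    refine (hmemVp 2 qc).mpr ⟨hqcD, hqc.2.1, ?_⟩
    intro j hj hadj
    have hjv : (j : ℕ) < 2 := hj
    have hj01 : (j : ℕ) = 0 ∨ (j : ℕ) = 1 := by omega
    rcases hj01 with h | h
    · have hj0 : j = 0 := Fin.ext (by omega)
      rw [hj0] at hadj
      exact hd₁c (hqc.2.2 d₁ hd₁D hadj)
    · have hj1 : j = 1 := Fin.ext (by omega)
      rw [hj1] at hadj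
      exact hbc (hqc.2.2 b hbD hadj)
  have hr₄V : r₄ ∈ Vp 3 := by
    refine (hmemVp 3 r₄).mpr ⟨hr₄.1, hr₄.2.1, ?_⟩
    intro j hj hadj
    have hjv : (j : ℕ) < 3 := hj
    have hj012 : (j : ℕ) = 0 ∨ (j : ℕ) = 1 ∨ (j : ℕ) = 2 := by omega
    rcases hj012 with h | h | h
    · have hj0 : j = 0 := Fin.ext (by omega)
      rw [hj0] at hadj
      exact hsd₁ (hr₄.2.2 d₁ hd₁D hadj).symm
    · have hj1 : j = 1 := Fin.ext (by omega)
      rw [hj1] at hadj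
      exact hsb (hr₄.2.2 b hbD hadj).symm
    · have hj2 : j = 2 := Fin.ext (by omega)
      rw [hj2] at hadj
      exact hsc (hr₄.2.2 c hcD hadj).symm
  have hr₅V : r₅ ∈ Vp 4 := by
    refine (hmemVp 4 r₅).mpr ⟨hr₅.1, hr₅.2.1, ?_⟩
    intro j hj hadj
    have hjv : (j : ℕ) < 4 := hj
    have hj0123 : (j : ℕ) = 0 ∨ (j : ℕ) = 1 ∨ (j : ℕ) = 2 ∨ (j : ℕ) = 3 := by omega
    rcases hj0123 with h | h | h | h
    · have hj0 : j = 0 := Fin.ext (by omega)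
      rw [hj0] at hadj
      exact htd₁ (hr₅.2.2 d₁ hd₁D hadj).symm
    · have hj1 : j = 1 := Fin.ext (by omega)
      rw [hj1] at hadj
      exact htb (hr₅.2.2 b hbD hadj).symm
    · have hj2 : j = 2 := Fin.ext (by omega)
      rw [hj2] at hadj
      exact htc (hr₅.2.2 c hcD hadj).symm
    · have hj3 : j = 3 := Fin.ext (by omega)
      rw [hj3] at hadj
      exact hst (hr₅.2.2 s hsD hadj)
  refine ⟨dv, hinj, hrange, Vp, hVeq, ⟨w, hr₁V, qb, hr₂V, qc, hr₃V, ?_⟩,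
    ⟨r₄, hr₄V, r₅, hr₅V, indep_pair' hr45⟩⟩
  exact indep_triple' (fun h => hnqbw h.symm) (fun h => hnqcw h.symm) hqbc
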